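/- Let d ≥ 1, let n = 2d, and let Δ be a well-distributed f-simplicial complex on [n]. Then Δ is equal to its own Alexander dual: Δ^∨ = Δ. -/

import Mathlib

open Finset

/-- `Δ`, given as the finset of its faces, is a simplicial complex on the vertex
set `Fin n`: a nonempty collection of subsets closed under taking subsets. -/
def IsComplex {n : ℕ} (Δ : Finset (Finset (Fin n))) : Prop :=
  Δ.Nonempty ∧ ∀ A ∈ Δ, ∀ B ⊆ A, B ∈ Δ

/-- The facets (maximal faces) of `Δ`. -/
def facets {n : ℕ} (Δ : Finset (Finset (Fin n))) : Finset (Finset (Fin n)) :=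
  Δ.filter fun F => ∀ G ∈ Δ, F ⊆ G → F = G

/-- The simplicial complex generated by a family `𝔉`: all subsets of members of `𝔉`. -/
def generated {n : ℕ} (𝔉 : Finset (Finset (Fin n))) : Finset (Finset (Fin n)) :=
  univ.filter fun A => ∃ F ∈ 𝔉, A ⊆ F

/-- The Newton complement dual `Δ^c`: the complex generated by the complements
of the facets of `Δ`. -/
def cdual {n : ℕ} (Δ : Finset (Finset (Fin n))) : Finset (Finset (Fin n)) :=
  generated ((facets Δ).image fun F => Fᶜ)

/-- The nonface complex of `Δ`: all subsets of `[n]` containing no facet of `Δ`. -/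
def nonfaceComplex {n : ℕ} (Δ : Finset (Finset (Fin n))) : Finset (Finset (Fin n)) :=
  univ.filter fun A => ∀ F ∈ facets Δ, ¬ F ⊆ A

/-- `Δ` is an `f`-simplicial complex: for every `k`, `Δ` and its nonface complex
have the same number of `k`-element members (the same `f`-vector). -/
def IsFComplex {n : ℕ} (Δ : Finset (Finset (Fin n))) : Prop :=
  ∀ k : ℕ, (Δ.filter fun A => A.card = k).card =
    ((nonfaceComplex Δ).filter fun A => A.card = k).card

/-- `Δ` is pure `(d-1)`-dimensional: every facet has exactly `d` elements. -/
def PureDim {n : ℕ} (d : ℕ) (Δ : Finset (Finset (Fin n))) : Prop :=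
  ∀ F ∈ facets Δ, F.card = d

/-- The minimal nonfaces of `Δ`: sets that are not faces but all of whose proper
subsets are faces. -/
def minNonfaces {n : ℕ} (Δ : Finset (Finset (Fin n))) : Finset (Finset (Fin n)) :=
  univ.filter fun A => A ∉ Δ ∧ ∀ B ⊂ A, B ∈ Δ

/-- The Alexander dual `Δ^∨`: the complex whose facets are the complements of the
minimal nonfaces of `Δ`. -/
def adual {n : ℕ} (Δ : Finset (Finset (Fin n))) : Finset (Finset (Fin n)) :=
  generated ((minNonfaces Δ).image fun F => Fᶜ)

/-- The homogeneous complement `Δ'` (in degree `e`): the complex generated by the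
`e`-element subsets of `[n]` that are not facets of `Δ`. -/
def hcompl {n : ℕ} (e : ℕ) (Δ : Finset (Finset (Fin n))) : Finset (Finset (Fin n)) :=
  generated (univ.filter fun A : Finset (Fin n) => A.card = e ∧ A ∉ facets Δ)

section Aux

variable {n d : ℕ}

lemma mem_generated {𝔉 : Finset (Finset (Fin n))} {A : Finset (Fin n)} :
    A ∈ generated 𝔉 ↔ ∃ F ∈ 𝔉, A ⊆ F := by simp [generated]

lemma mem_facets' (Δ : Finset (Finset (Fin n))) {A : Finset (Fin n)} :
    A ∈ facets Δ ↔ A ∈ Δ ∧ ∀ G ∈ Δ, A ⊆ G → A = G := by simp [facets]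

lemma exists_facet {Δ : Finset (Finset (Fin n))} (hΔ : IsComplex Δ) {A : Finset (Fin n)}
    (hA : A ∈ Δ) : ∃ F ∈ facets Δ, A ⊆ F := by
  obtain ⟨F, hF, hmax⟩ := (Δ.filter (A ⊆ ·)).exists_maximal ⟨A, by simp [hA]⟩
  simp only [mem_filter] at hF
  refine ⟨F, (mem_facets' Δ).2 ⟨hF.1, fun G hG hFG => ?_⟩, hF.2⟩
  by_contra hne
  exact hne (Finset.Subset.antisymm hFG (hmax (mem_filter.2 ⟨hG, hF.2.trans hFG⟩) hFG))

lemma face_card_le {Δ : Finset (Finset (Fin n))} (hΔ : IsComplex Δ) (hpure : PureDim d Δ)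
    {A : Finset (Fin n)} (hA : A ∈ Δ) : A.card ≤ d := by
  obtain ⟨F, hF, hAF⟩ := exists_facet hΔ hA
  exact (card_le_card hAF).trans (hpure F hF).le

lemma facet_iff {Δ : Finset (Finset (Fin n))} (hΔ : IsComplex Δ) (hpure : PureDim d Δ)
    {A : Finset (Fin n)} : A ∈ facets Δ ↔ A ∈ Δ ∧ A.card = d := by
  constructor
  · exact fun h => ⟨filter_subset _ _ h, hpure A h⟩
  · rintro ⟨hA, hcard⟩
    refine (mem_facets' Δ).2 ⟨hA, fun G hG hAG => ?_⟩
    exact (eq_of_subset_of_card_le hAG (by rw [hcard]; exact face_card_le hΔ hpure hG)).symm ▸ rfl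

lemma small_mem {Δ : Finset (Finset (Fin n))} (hpure : PureDim d Δ) (hf : IsFComplex Δ)
    {A : Finset (Fin n)} (hA : A.card < d) : A ∈ Δ := by
  have h1 : (nonfaceComplex Δ).filter (fun B => B.card = A.card)
      = univ.filter (fun B : Finset (Fin n) => B.card = A.card) := by
    ext B
    simp only [nonfaceComplex, mem_filter, mem_univ, true_and, and_iff_right_iff_imp,
      filter_filter]
    intro hB F hF hFB
    have h1 := card_le_card hFB
    have h2 := hpure F hF
    omega
  have h2 := hf A.card
  rw [h1] at h2
  have hsub : Δ.filter (fun B => B.card = A.card)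
      ⊆ univ.filter (fun B : Finset (Fin n) => B.card = A.card) :=
    fun B hB => mem_filter.2 ⟨mem_univ _, (mem_filter.1 hB).2⟩
  have h3 := eq_of_subset_of_card_le hsub h2.ge
  have h4 : A ∈ Δ.filter (fun B => B.card = A.card) := by
    rw [h3]; exact mem_filter.2 ⟨mem_univ _, rfl⟩
  exact (mem_filter.1 h4).1

lemma facets_card_eq {Δ : Finset (Finset (Fin n))} (hΔ : IsComplex Δ) (hpure : PureDim d Δ)
    (hf : IsFComplex Δ) :
    (facets Δ).card + (facets Δ).card
      = (univ.filter (fun A : Finset (Fin n) => A.card = d)).card := by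
  have h1 : Δ.filter (fun A => A.card = d) = facets Δ := by
    ext A; rw [mem_filter, facet_iff hΔ hpure]
  have hfsub : facets Δ ⊆ univ.filter (fun A : Finset (Fin n) => A.card = d) :=
    fun F hF => mem_filter.2 ⟨mem_univ _, hpure F hF⟩
  have h2 : (nonfaceComplex Δ).filter (fun A => A.card = d)
      = (univ.filter fun A : Finset (Fin n) => A.card = d) \ facets Δ := by
    ext A
    simp only [nonfaceComplex, mem_filter, mem_sdiff, mem_univ, true_and, filter_filter]
    constructor
    · rintro ⟨hnf, hc⟩
      exact ⟨hc, fun hA => hnf A hA (Finset.Subset.refl A)⟩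
    · rintro ⟨hc, hA⟩
      refine ⟨fun F hF hFA => hA ?_, hc⟩
      have hFA' : F = A := eq_of_subset_of_card_le hFA (by rw [hpure F hF, hc])
      exact hFA' ▸ hF
  have h3 := hf d
  rw [h1, h2, card_sdiff_of_subset hfsub] at h3
  have hle := card_le_card hfsub
  omega

lemma facets_cdual (hn : n = 2 * d) {Δ : Finset (Finset (Fin n))} (hpure : PureDim d Δ) :
    facets (cdual Δ) = (facets Δ).image (fun F => Fᶜ) := by
  have hcard : ∀ F ∈ facets Δ, (Fᶜ).card = d := fun F hF => by
    rw [card_compl, Fintype.card_fin, hpure F hF]; omega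
  have hmemc : ∀ A : Finset (Fin n), A ∈ cdual Δ ↔ ∃ F ∈ facets Δ, A ⊆ Fᶜ := by
    intro A; rw [cdual, mem_generated]
    constructor
    · rintro ⟨G, hG, hAG⟩
      obtain ⟨F, hF, rfl⟩ := mem_image.1 hG
      exact ⟨F, hF, hAG⟩
    · rintro ⟨F, hF, hAF⟩
      exact ⟨Fᶜ, mem_image_of_mem _ hF, hAF⟩
  ext G
  rw [mem_facets' (cdual Δ)]
  constructor
  · rintro ⟨hG, hmax⟩
    obtain ⟨F, hF, hGF⟩ := (hmemc G).1 hG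
    have hGF' : G = Fᶜ := hmax Fᶜ ((hmemc _).2 ⟨F, hF, Finset.Subset.refl _⟩) hGF
    exact hGF' ▸ mem_image_of_mem _ hF
  · rintro hG
    obtain ⟨F, hF, rfl⟩ := mem_image.1 hG
    refine ⟨(hmemc _).2 ⟨F, hF, Finset.Subset.refl _⟩, fun H hH hFH => ?_⟩
    obtain ⟨F', hF', hHF'⟩ := (hmemc H).1 hH
    have h1 : Fᶜ = F'ᶜ :=
      eq_of_subset_of_card_le (hFH.trans hHF') (by rw [hcard F hF, hcard F' hF'])
    exact Finset.Subset.antisymm hFH (h1 ▸ hHF')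

lemma compl_facet_iff (hn : n = 2 * d) {Δ : Finset (Finset (Fin n))} (hΔ : IsComplex Δ)
    (hpure : PureDim d Δ) (hf : IsFComplex Δ)
    (hwd : facets Δ ∩ facets (cdual Δ) = ∅) {A : Finset (Fin n)} (hA : A.card = d) :
    A ∈ facets Δ ↔ Aᶜ ∉ facets Δ := by
  have hwd' : ∀ F ∈ facets Δ, Fᶜ ∉ facets Δ := by
    intro F hF hFc
    have hmem : F ∈ facets Δ ∩ facets (cdual Δ) := by
      refine mem_inter.2 ⟨hF, ?_⟩
      rw [facets_cdual hn hpure]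
      exact mem_image.2 ⟨Fᶜ, hFc, compl_compl F⟩
    rw [hwd] at hmem
    exact absurd hmem (notMem_empty F)
  constructor
  · exact fun h => hwd' A h
  · intro hAc
    set S := univ.filter (fun B : Finset (Fin n) => B.card = d) with hS
    have hcc : ∀ F ∈ facets Δ, (Fᶜ).card = d := fun F hF => by
      rw [card_compl, Fintype.card_fin, hpure F hF]; omega
    have hdisj : Disjoint (facets Δ) ((facets Δ).image (fun F => Fᶜ)) := by
      rw [Finset.disjoint_left]
      intro a ha hai
      obtain ⟨F, hF, rfl⟩ := mem_image.1 hai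
      exact hwd' F hF ha
    have hsub : facets Δ ∪ (facets Δ).image (fun F => Fᶜ) ⊆ S := by
      intro B hB
      rcases mem_union.1 hB with h | h
      · exact mem_filter.2 ⟨mem_univ _, hpure B h⟩
      · obtain ⟨F, hF, rfl⟩ := mem_image.1 h
        exact mem_filter.2 ⟨mem_univ _, hcc F hF⟩
    have hcardu : (facets Δ ∪ (facets Δ).image (fun F => Fᶜ)).card = S.card := by
      rw [card_union_of_disjoint hdisj,
        card_image_of_injective _ (fun x y h => by simpa using congrArg compl h)]
      exact facets_card_eq hΔ hpure hf
    have hequ : facets Δ ∪ (facets Δ).image (fun F => Fᶜ) = S :=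
      eq_of_subset_of_card_le hsub hcardu.ge
    have hAS : A ∈ S := mem_filter.2 ⟨mem_univ _, hA⟩
    rw [← hequ, mem_union] at hAS
    rcases hAS with h | h
    · exact h
    · obtain ⟨F, hF, hFA⟩ := mem_image.1 h
      exact absurd (show Aᶜ ∈ facets Δ by rw [← hFA, compl_compl]; exact hF) hAc

lemma mem_iff_compl_not_mem (hd : 1 ≤ d) (hn : n = 2 * d) {Δ : Finset (Finset (Fin n))}
    (hΔ : IsComplex Δ) (hpure : PureDim d Δ) (hf : IsFComplex Δ)
    (hwd : facets Δ ∩ facets (cdual Δ) = ∅) (A : Finset (Fin n)) :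
    A ∈ Δ ↔ Aᶜ ∉ Δ := by
  have hAc : Aᶜ.card = n - A.card := by rw [card_compl, Fintype.card_fin]
  have hAn : A.card ≤ n := by simpa using card_le_card A.subset_univ
  rcases lt_trichotomy A.card d with h | h | h
  · have h1 : A ∈ Δ := small_mem hpure hf h
    have h2 : Aᶜ ∉ Δ := fun hc => by
      have := face_card_le hΔ hpure hc; omega
    simp [h1, h2]
  · have hc : Aᶜ.card = d := by omega
    rw [show (A ∈ Δ) ↔ A ∈ facets Δ by rw [facet_iff hΔ hpure]; simp [h],
      show (Aᶜ ∈ Δ) ↔ Aᶜ ∈ facets Δ by rw [facet_iff hΔ hpure]; simp [hc]]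
    exact compl_facet_iff hn hΔ hpure hf hwd h
  · have h1 : A ∉ Δ := fun hc => by have := face_card_le hΔ hpure hc; omega
    have h2 : Aᶜ ∈ Δ := small_mem hpure hf (by omega)
    simp [h1, h2]

lemma exists_minNonface {Δ : Finset (Finset (Fin n))} :
    ∀ B : Finset (Fin n), B ∉ Δ → ∃ N ∈ minNonfaces Δ, N ⊆ B := by
  intro B
  induction B using Finset.strongInductionOn with
  | _ B ih =>
    intro hB
    by_cases h : ∀ C ⊂ B, C ∈ Δ
    · exact ⟨B, by simp only [minNonfaces, mem_filter, mem_univ, true_and]; exact ⟨hB, h⟩, Finset.Subset.refl B⟩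
    · push_neg at h
      obtain ⟨C, hCB, hC⟩ := h
      obtain ⟨N, hN, hNC⟩ := ih C hCB hC
      exact ⟨N, hN, hNC.trans hCB.subset⟩

lemma mem_adual {Δ : Finset (Finset (Fin n))} (hΔ : IsComplex Δ) {A : Finset (Fin n)} :
    A ∈ adual Δ ↔ Aᶜ ∉ Δ := by
  rw [adual, mem_generated]
  constructor
  · rintro ⟨G, hG, hAG⟩ hc
    obtain ⟨N, hN, rfl⟩ := mem_image.1 hG
    have hNA : N ⊆ Aᶜ := fun x hx =>
      mem_compl.2 fun hxA => (mem_compl.1 (hAG hxA)) hx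
    have hN' : N ∉ Δ := by simp only [minNonfaces, mem_filter] at hN; exact hN.2.1
    exact hN' (hΔ.2 _ hc _ hNA)
  · intro hc
    obtain ⟨N, hN, hNA⟩ := exists_minNonface _ hc
    refine ⟨Nᶜ, mem_image_of_mem _ hN, fun x hx => ?_⟩
    exact mem_compl.2 fun hxN => (mem_compl.1 (hNA hxN)) hx

end Aux

/-- a well-distributed `f`-simplicial complex `Δ` (`n = 2d`, `Δ` pure
`(d-1)`-dimensional, `F(Δ) ∩ F(Δ^c) = ∅`) equals its own Alexander dual. -/
theorem stmt3 {d n : ℕ} (hd : 1 ≤ d) (hn : n = 2 * d)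
    (Δ : Finset (Finset (Fin n))) (hΔ : IsComplex Δ) (hpure : PureDim d Δ)
    (hf : IsFComplex Δ) (hwd : facets Δ ∩ facets (cdual Δ) = ∅) :
    adual Δ = Δ := by
  ext A
  rw [mem_adual hΔ]
  exact (mem_iff_compl_not_mem hd hn hΔ hpure hf hwd A).symm
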